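/- arXiv:2410.03669 — 2 statements merged into one kernel-verified Lean document; each statement's English description precedes it below -/
import Mathlib

section
/- Let T = (T₁,…,T_d) be a d-tuple of commuting bounded operators. Then q·σ_ap(T) ⊆ closure(JtW_q(T)), where σ_ap(T) is the joint approximate point spectrum. -/
open scoped InnerProductSpace

variable {H : Type*} [NormedAddCommGroup H] [InnerProductSpace ℂ H]

/-- The joint `q`-numerical range of a `d`-tuple of bounded operators:
`{(⟨T₁x,y⟩,…,⟨T_dx,y⟩) : ‖x‖ = ‖y‖ = 1, ⟨x,y⟩ = q}` (with `⟨x,y⟩` linear in `x`). -/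
def JtW {d : ℕ} (q : ℂ) (T : Fin d → H →L[ℂ] H) : Set (Fin d → ℂ) :=
  {z | ∃ x y : H, ‖x‖ = 1 ∧ ‖y‖ = 1 ∧ ⟪y, x⟫_ℂ = q ∧ z = fun i => ⟪y, (T i) x⟫_ℂ}

lemma exists_unit_inner_eq (hdim : 2 ≤ Module.rank ℂ H) {x : H} (hx : ‖x‖ = 1)
    {q : ℂ} (hq : ‖q‖ ≤ 1) : ∃ y : H, ‖y‖ = 1 ∧ ⟪y, x⟫_ℂ = q := by
  have hx0 : x ≠ 0 := by intro h; rw [h, norm_zero] at hx; norm_num at hx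
  obtain ⟨v, hv⟩ : ∃ v : H, v ∉ Submodule.span ℂ {x} := by
    by_contra h
    push_neg at h
    have htop : (⊤ : Submodule ℂ H) = Submodule.span ℂ {x} :=
      le_antisymm (fun v _ => h v) le_top
    have h1 : Module.rank ℂ H ≤ 1 := by
      calc Module.rank ℂ H = Module.rank ℂ (⊤ : Submodule ℂ H) := (rank_top ℂ H).symm
        _ = Module.rank ℂ (Submodule.span ℂ ({x} : Set H)) := by rw [htop]
        _ ≤ Cardinal.mk ({x} : Set H) := rank_span_le _
        _ = 1 := Cardinal.mk_singleton x
    exact absurd (hdim.trans h1) (by norm_num)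
  have hxx : ⟪x, x⟫_ℂ = 1 := by
    rw [inner_self_eq_norm_sq_to_K, hx]; norm_num
  set u0 : H := v - ⟪x, v⟫_ℂ • x with hu0def
  have hxu0 : ⟪x, u0⟫_ℂ = 0 := by
    rw [hu0def, inner_sub_right, inner_smul_right, hxx, mul_one, sub_self]
  have hu00 : u0 ≠ 0 := by
    intro h
    apply hv
    have : v = ⟪x, v⟫_ℂ • x := by rwa [hu0def, sub_eq_zero] at h
    rw [this]
    exact Submodule.smul_mem _ _ (Submodule.mem_span_singleton_self x)
  set u : H := ‖u0‖⁻¹ • u0 with hudef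
  have hu : ‖u‖ = 1 := by
    rw [hudef, norm_smul, norm_inv, norm_norm]
    exact inv_mul_cancel₀ (norm_ne_zero_iff.mpr hu00)
  have hxu : ⟪x, u⟫_ℂ = 0 := by
    rw [hudef, RCLike.real_smul_eq_coe_smul (K := ℂ), inner_smul_right, hxu0, mul_zero]
  set s : ℝ := Real.sqrt (1 - (‖q‖)^2) with hsdef
  have hq2 : (‖q‖)^2 ≤ 1 := by
    nlinarith [norm_nonneg q]
  have hs2 : s^2 = 1 - (‖q‖)^2 := Real.sq_sqrt (by linarith)
  refine ⟨(starRingEnd ℂ q) • x + (s : ℂ) • u, ?_, ?_⟩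
  · have horth : ⟪(starRingEnd ℂ q) • x, (s : ℂ) • u⟫_ℂ = 0 := by
      rw [inner_smul_right, inner_smul_left, hxu]; ring
    have := norm_add_sq_eq_norm_sq_add_norm_sq_of_inner_eq_zero _ _ horth
    have hn2 : ‖(starRingEnd ℂ q) • x + (s : ℂ) • u‖^2 = 1 := by
      rw [sq, this, norm_smul, norm_smul, hx, hu, mul_one, mul_one]
      have h1 : ‖(starRingEnd ℂ q)‖ = ‖q‖ := by
        simp
      have h2 : ‖(s : ℂ)‖ = s := by
        have hs0 : 0 ≤ s := Real.sqrt_nonneg _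
        simp [abs_of_nonneg hs0]
      rw [h1, h2]; nlinarith
    nlinarith [norm_nonneg ((starRingEnd ℂ q) • x + (s : ℂ) • u)]
  · rw [inner_add_left, inner_smul_left, inner_smul_left, hxx]
    have hux : ⟪u, x⟫_ℂ = 0 := by
      rw [← inner_conj_symm, hxu, map_zero]
    rw [hux]
    simp

theorem stmt_11 {d : ℕ} (hdim : 2 ≤ Module.rank ℂ H) (q : ℂ) (hq : ‖q‖ ≤ 1)
    (T : Fin d → H →L[ℂ] H) (hcomm : ∀ i j, Commute (T i) (T j)) :
    (fun ξ : Fin d → ℂ => fun i => q * ξ i) ''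
        {ξ : Fin d → ℂ | ∀ ε > (0 : ℝ), ∃ x : H, ‖x‖ = 1 ∧ ∑ i, ‖T i x - ξ i • x‖ < ε}
      ⊆ closure (JtW q T) := by
  rintro z ⟨ξ, hξ, rfl⟩
  rw [Metric.mem_closure_iff]
  intro ε hε
  obtain ⟨x, hx, hsum⟩ := hξ (ε / 2) (by linarith)
  obtain ⟨y, hy, hyx⟩ := exists_unit_inner_eq hdim hx hq
  refine ⟨fun i => ⟪y, (T i) x⟫_ℂ, ⟨x, y, hx, hy, hyx, rfl⟩, ?_⟩
  rw [dist_pi_lt_iff hε]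
  intro i
  have hterm : ‖T i x - ξ i • x‖ ≤ ε / 2 := by
    calc ‖T i x - ξ i • x‖ ≤ ∑ j, ‖T j x - ξ j • x‖ :=
          Finset.single_le_sum (f := fun j => ‖T j x - ξ j • x‖)
            (fun j _ => norm_nonneg _) (Finset.mem_univ i)
      _ ≤ ε / 2 := le_of_lt hsum
  have hkey : q * ξ i - ⟪y, (T i) x⟫_ℂ = ⟪y, ξ i • x - T i x⟫_ℂ := by
    rw [inner_sub_right, inner_smul_right, hyx]; ring
  calc dist (q * ξ i) ⟪y, (T i) x⟫_ℂ = ‖q * ξ i - ⟪y, (T i) x⟫_ℂ‖ := by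
        rw [Complex.dist_eq]
    _ = ‖⟪y, ξ i • x - T i x⟫_ℂ‖ := by rw [hkey]
    _ ≤ ‖y‖ * ‖ξ i • x - T i x‖ := norm_inner_le_norm _ _
    _ = ‖T i x - ξ i • x‖ := by rw [hy, one_mul, norm_sub_rev]
    _ ≤ ε / 2 := hterm
    _ < ε := by linarith
end

section
/- For T = (T₁,…,T_d) ∈ B(H)^d and q ∈ (0,1), the joint q-numerical radius satisfies (q/(2√d(2−q²)))·‖T‖ ≤ Jtω_q(T) ≤ ‖T‖, where ‖T‖ = sup_{‖x‖=1} (∑_{i=1}^d ‖T_ix‖²)^{1/2}. -/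
open scoped InnerProductSpace

variable {H : Type*} [NormedAddCommGroup H] [InnerProductSpace ℂ H]

/-- The joint `q`-numerical radius. -/
noncomputable def Jtw {d : ℕ} (q : ℂ) (T : Fin d → H →L[ℂ] H) : ℝ :=
  sSup {r | ∃ x y : H, ‖x‖ = 1 ∧ ‖y‖ = 1 ∧ ⟪y, x⟫_ℂ = q ∧
    r = Real.sqrt (∑ i, ‖⟪y, (T i) x⟫_ℂ‖ ^ 2)}

/-- The single-operator `q`-numerical radius. -/
noncomputable def wq (q : ℂ) (S : H →L[ℂ] H) : ℝ :=
  sSup {r | ∃ x y : H, ‖x‖ = 1 ∧ ‖y‖ = 1 ∧ ⟪y, x⟫_ℂ = q ∧ r = ‖⟪y, S x⟫_ℂ‖}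

/-- The norm `‖T‖ = sup_{‖x‖=1} (∑ ‖T_i x‖²)^{1/2}` of a tuple of operators. -/
noncomputable def tupNorm {d : ℕ} (T : Fin d → H →L[ℂ] H) : ℝ :=
  sSup {r | ∃ x : H, ‖x‖ = 1 ∧ r = Real.sqrt (∑ i, ‖(T i) x‖ ^ 2)}

-- exists nonzero → unit vector
lemma exists_unit (hdim : 2 ≤ Module.rank ℂ H) : ∃ u : H, ‖u‖ = 1 := by
  have h0 : (0 : Cardinal) < Module.rank ℂ H := lt_of_lt_of_le (by norm_num) hdim
  obtain ⟨v, hv⟩ := rank_pos_iff_exists_ne_zero.mp h0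
  refine ⟨‖v‖⁻¹ • v, ?_⟩
  have : ‖v‖ ≠ 0 := norm_ne_zero_iff.mpr hv
  rw [norm_smul, norm_inv, norm_norm, inv_mul_cancel₀ this]

lemma unit_orth (hdim : 2 ≤ Module.rank ℂ H) (u : H) :
    ∃ e : H, ‖e‖ = 1 ∧ ⟪u, e⟫_ℂ = 0 := by
  have hne : ∃ v : H, v ∈ (ℂ ∙ u)ᗮ ∧ v ≠ 0 := by
    by_contra h
    push_neg at h
    have hbot : (ℂ ∙ u)ᗮ = ⊥ := (Submodule.eq_bot_iff _).2 fun v hv => h v hv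
    have htop : (ℂ ∙ u) = ⊤ := Submodule.orthogonal_eq_bot_iff.mp hbot
    have hle : Module.rank ℂ H ≤ 1 := rank_le_one_iff.mpr ⟨u, fun v => by
      have : v ∈ (ℂ ∙ u) := htop ▸ Submodule.mem_top
      exact Submodule.mem_span_singleton.mp this⟩
    exact absurd (hdim.trans hle) (by norm_num)
  obtain ⟨v, hv, hv0⟩ := hne
  have hvn : ‖v‖ ≠ 0 := norm_ne_zero_iff.mpr hv0
  have huv : ⟪u, v⟫_ℂ = 0 := hv u (Submodule.mem_span_singleton_self u)
  refine ⟨((‖v‖ : ℂ))⁻¹ • v, ?_, ?_⟩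
  · rw [norm_smul]
    simp [hvn]
  · rw [inner_smul_right, huv, mul_zero]

lemma combo_norm {u e : H} (hu : ‖u‖ = 1) (he : ‖e‖ = 1) (hue : ⟪u, e⟫_ℂ = 0)
    (a c : ℂ) (h : ‖a‖ ^ 2 + ‖c‖ ^ 2 = 1) : ‖a • u + c • e‖ = 1 := by
  have heu : ⟪e, u⟫_ℂ = 0 := inner_eq_zero_symm.mp hue
  have huu : ⟪u, u⟫_ℂ = 1 := by
    rw [inner_self_eq_norm_sq_to_K, hu]; norm_num
  have hee : ⟪e, e⟫_ℂ = 1 := by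
    rw [inner_self_eq_norm_sq_to_K, he]; norm_num
  have key : ⟪a • u + c • e, a • u + c • e⟫_ℂ = 1 := by
    simp only [inner_add_left, inner_add_right, inner_smul_left, inner_smul_right,
      huu, hee, hue, heu, mul_zero, mul_one, add_zero, zero_add]
    rw [Complex.mul_conj, Complex.mul_conj, ← Complex.ofReal_add, ← Complex.sq_norm a,
      ← Complex.sq_norm c, h, Complex.ofReal_one]
  have h2 : ‖a • u + c • e‖ ^ 2 = 1 := by
    have := inner_self_eq_norm_sq (𝕜 := ℂ) (a • u + c • e)
    rw [key] at this
    simpa using this.symm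
  nlinarith [norm_nonneg (a • u + c • e)]

lemma exists_qpair (hdim : 2 ≤ Module.rank ℂ H) {q : ℝ} (hq0 : 0 ≤ q) (hq1 : q ≤ 1) :
    ∃ x y : H, ‖x‖ = 1 ∧ ‖y‖ = 1 ∧ ⟪y, x⟫_ℂ = (q : ℂ) := by
  obtain ⟨u, hu⟩ := exists_unit hdim
  obtain ⟨e, he, hue⟩ := unit_orth hdim u
  have heu : ⟪e, u⟫_ℂ = 0 := inner_eq_zero_symm.mp hue
  have huu : ⟪u, u⟫_ℂ = 1 := by rw [inner_self_eq_norm_sq_to_K, hu]; norm_num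
  have h1q : (0:ℝ) ≤ 1 - q ^ 2 := by nlinarith
  refine ⟨u, (q : ℂ) • u + ((Real.sqrt (1 - q ^ 2) : ℝ) : ℂ) • e, hu, ?_, ?_⟩
  · apply combo_norm hu he hue
    rw [Complex.norm_real, Complex.norm_real, Real.norm_eq_abs, Real.norm_eq_abs, sq_abs, sq_abs, Real.sq_sqrt h1q]
    ring
  · rw [inner_add_left, inner_smul_left, inner_smul_left, huu, heu, mul_zero, add_zero,
      mul_one, Complex.conj_ofReal]

lemma jtwSet_bdd {d : ℕ} (q : ℂ) (T : Fin d → H →L[ℂ] H) :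
    BddAbove {r | ∃ x y : H, ‖x‖ = 1 ∧ ‖y‖ = 1 ∧ ⟪y, x⟫_ℂ = q ∧
      r = Real.sqrt (∑ i, ‖⟪y, (T i) x⟫_ℂ‖ ^ 2)} := by
  refine ⟨Real.sqrt (∑ i, ‖T i‖ ^ 2), ?_⟩
  rintro r ⟨x, y, hx, hy, -, rfl⟩
  apply Real.sqrt_le_sqrt
  apply Finset.sum_le_sum
  intro i _
  have h1 : ‖⟪y, (T i) x⟫_ℂ‖ ≤ ‖T i‖ := by
    calc ‖⟪y, (T i) x⟫_ℂ‖ = ‖⟪y, (T i) x⟫_ℂ‖ := rfl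
    _ ≤ ‖y‖ * ‖(T i) x‖ := norm_inner_le_norm _ _
    _ = ‖(T i) x‖ := by rw [hy, one_mul]
    _ ≤ ‖T i‖ * ‖x‖ := (T i).le_opNorm x
    _ = ‖T i‖ := by rw [hx, mul_one]
  exact pow_le_pow_left₀ (norm_nonneg _) h1 2

lemma tupSet_bdd {d : ℕ} (T : Fin d → H →L[ℂ] H) :
    BddAbove {r | ∃ x : H, ‖x‖ = 1 ∧ r = Real.sqrt (∑ i, ‖(T i) x‖ ^ 2)} := by
  refine ⟨Real.sqrt (∑ i, ‖T i‖ ^ 2), ?_⟩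
  rintro r ⟨x, hx, rfl⟩
  apply Real.sqrt_le_sqrt
  apply Finset.sum_le_sum
  intro i _
  have h1 : ‖(T i) x‖ ≤ ‖T i‖ := by
    calc ‖(T i) x‖ ≤ ‖T i‖ * ‖x‖ := (T i).le_opNorm x
    _ = ‖T i‖ := by rw [hx, mul_one]
  exact pow_le_pow_left₀ (norm_nonneg _) h1 2

lemma aux_Jtw_nonneg {d : ℕ} (hdim : 2 ≤ Module.rank ℂ H) {q : ℝ} (hq0 : 0 ≤ q) (hq1 : q ≤ 1)
    (T : Fin d → H →L[ℂ] H) : 0 ≤ Jtw (q : ℂ) T := by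
  obtain ⟨x, y, hx, hy, hxy⟩ := exists_qpair hdim hq0 hq1 (H := H)
  have hmem : Real.sqrt (∑ i, ‖⟪y, (T i) x⟫_ℂ‖ ^ 2) ∈
      {r | ∃ x y : H, ‖x‖ = 1 ∧ ‖y‖ = 1 ∧ ⟪y, x⟫_ℂ = (q:ℂ) ∧
      r = Real.sqrt (∑ i, ‖⟪y, (T i) x⟫_ℂ‖ ^ 2)} := ⟨x, y, hx, hy, hxy, rfl⟩
  exact le_trans (Real.sqrt_nonneg _) (le_csSup (jtwSet_bdd _ T) hmem)

lemma step2 {d : ℕ} (hdim : 2 ≤ Module.rank ℂ H) {q : ℝ} (hq0 : 0 < q) (hq1 : q ≤ 1)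
    (T : Fin d → H →L[ℂ] H) (i : Fin d) {x : H} (hx : ‖x‖ = 1) :
    q * ‖⟪x, (T i) x⟫_ℂ‖ ≤ Jtw (q : ℂ) T := by
  set S := T i with hS
  set α := ⟪x, S x⟫_ℂ with hα
  set v := S x - α • x with hv
  have hxx : ⟪x, x⟫_ℂ = 1 := by rw [inner_self_eq_norm_sq_to_K, hx]; norm_num
  have hxv : ⟪x, v⟫_ℂ = 0 := by
    rw [hv, inner_sub_right, inner_smul_right, hxx, mul_one, ← hα, sub_self]
  -- find e
  have he : ∃ e : H, ‖e‖ = 1 ∧ ⟪x, e⟫_ℂ = 0 ∧ ⟪e, S x⟫_ℂ = ((‖v‖ : ℝ) : ℂ) := by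
    by_cases h0 : v = 0
    · obtain ⟨e, he1, he2⟩ := unit_orth hdim x
      refine ⟨e, he1, he2, ?_⟩
      have : S x = α • x := by rw [← sub_eq_zero]; exact h0
      rw [this, inner_smul_right, inner_eq_zero_symm.mp he2, mul_zero, h0, norm_zero,
        Complex.ofReal_zero]
    · have hvn : ‖v‖ ≠ 0 := norm_ne_zero_iff.mpr h0
      refine ⟨((‖v‖ : ℂ))⁻¹ • v, ?_, ?_, ?_⟩
      · rw [norm_smul]; simp [hvn]
      · rw [inner_smul_right, hxv, mul_zero]
      · have hSx : S x = α • x + v := by rw [hv]; abel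
        have hvx : ⟪v, x⟫_ℂ = 0 := inner_eq_zero_symm.mp hxv
        have hvc : ((‖v‖ : ℝ) : ℂ) ≠ 0 := Complex.ofReal_ne_zero.mpr hvn
        rw [hSx, inner_add_right]
        simp only [inner_smul_left, inner_smul_right, hvx, inner_self_eq_norm_sq_to_K,
          map_inv₀, Complex.conj_ofReal, mul_zero, zero_add]
        field_simp
        rfl
  obtain ⟨e, he1, he2, he3⟩ := he
  set A := ‖α‖ with hA
  set φ : ℂ := if α = 0 then 1 else α / (A : ℂ) with hφ
  have hφa : ‖φ‖ = 1 := by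
    by_cases h0 : α = 0
    · simp [hφ, h0]
    · have hA0 : (A : ℝ) ≠ 0 := by simp [hA, h0]
      simp [hφ, h0, norm_div, Complex.norm_real, abs_of_nonneg (norm_nonneg α), hA]
  have hαφ : α = (A : ℂ) * φ := by
    by_cases h0 : α = 0
    · simp [h0, hA]
    · have hA0 : (A : ℂ) ≠ 0 := by
        simp [hA, Complex.ofReal_eq_zero, h0]
      simp [hφ, h0]
      field_simp
  have h1q : (0:ℝ) ≤ 1 - q ^ 2 := by nlinarith
  set s : ℝ := Real.sqrt (1 - q ^ 2) with hs
  have hs0 : 0 ≤ s := Real.sqrt_nonneg _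
  set c : ℂ := (s : ℂ) * (starRingEnd ℂ) φ with hc
  set y := (q : ℂ) • x + c • e with hy
  have hyn : ‖y‖ = 1 := by
    apply combo_norm hx he1 he2
    simp only [hc, norm_mul, Complex.norm_real, Real.norm_eq_abs, Complex.norm_conj, hφa, mul_one, sq_abs]
    nlinarith [Real.sq_sqrt h1q]
  have hyx : ⟪y, x⟫_ℂ = (q : ℂ) := by
    rw [hy, inner_add_left, inner_smul_left, inner_smul_left, hxx,
      inner_eq_zero_symm.mp he2, mul_zero, add_zero, mul_one, Complex.conj_ofReal]
  have hySx : ⟪y, S x⟫_ℂ = φ * ((q * A + s * ‖v‖ : ℝ) : ℂ) := by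
    rw [hy, inner_add_left, inner_smul_left, inner_smul_left, he3, Complex.conj_ofReal, hc,
      map_mul, Complex.conj_conj, Complex.conj_ofReal, ← hα, hαφ]
    push_cast
    ring
  have habs : ‖⟪y, S x⟫_ℂ‖ = q * A + s * ‖v‖ := by
    rw [hySx, norm_mul, hφa, one_mul, Complex.norm_real, Real.norm_eq_abs]
    have : (0:ℝ) ≤ q * A + s * ‖v‖ := by positivity
    exact abs_of_nonneg this
  have hstep : q * A ≤ ‖⟪y, S x⟫_ℂ‖ := by
    rw [habs]
    nlinarith [norm_nonneg v]
  -- now compare with Jtw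
  have hle : ‖⟪y, S x⟫_ℂ‖ ≤ Real.sqrt (∑ j, ‖⟪y, (T j) x⟫_ℂ‖ ^ 2) := by
    rw [show ‖⟪y, S x⟫_ℂ‖ = Real.sqrt (‖⟪y, S x⟫_ℂ‖ ^ 2) from
      (Real.sqrt_sq (norm_nonneg _)).symm]
    apply Real.sqrt_le_sqrt
    exact Finset.single_le_sum (f := fun j => ‖⟪y, (T j) x⟫_ℂ‖ ^ 2)
      (fun j _ => sq_nonneg _) (Finset.mem_univ i)
  have hmem : Real.sqrt (∑ j, ‖⟪y, (T j) x⟫_ℂ‖ ^ 2) ≤ Jtw (q : ℂ) T :=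
    le_csSup (jtwSet_bdd _ T) ⟨x, y, hx, hyn, hyx, rfl⟩
  calc q * ‖⟪x, S x⟫_ℂ‖ = q * A := rfl
  _ ≤ ‖⟪y, S x⟫_ℂ‖ := hstep
  _ ≤ _ := le_trans hle hmem

lemma abs_sub_le' (a b : ℂ) : ‖a - b‖ ≤ ‖a‖ + ‖b‖ := by
  simpa [sub_eq_add_neg] using norm_add_le a (-b)

lemma norm_apply_le {S : H →L[ℂ] H} {M : ℝ} (hM : 0 ≤ M)
    (h : ∀ u : H, ‖⟪u, S u⟫_ℂ‖ ≤ M * ‖u‖ ^ 2) {x : H} (hx : ‖x‖ = 1) :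
    ‖S x‖ ≤ 2 * M := by
  have h' : ∀ u : H, ‖⟪(S : H →ₗ[ℂ] H) u, u⟫_ℂ‖ ≤ M * ‖u‖ ^ 2 := by
    intro u
    have : ⟪(S : H →ₗ[ℂ] H) u, u⟫_ℂ = (starRingEnd ℂ) ⟪u, S u⟫_ℂ := (inner_conj_symm _ _).symm
    rw [this, Complex.norm_conj]
    exact h u
  by_cases h0 : S x = 0
  · rw [h0, norm_zero]; positivity
  have hSn : ‖S x‖ ≠ 0 := norm_ne_zero_iff.mpr h0
  set y := ((‖S x‖ : ℂ))⁻¹ • S x with hy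
  have hyn : ‖y‖ = 1 := by rw [hy, norm_smul]; simp [hSn]
  have hin : ⟪(S : H →ₗ[ℂ] H) x, y⟫_ℂ = ((‖S x‖ : ℝ) : ℂ) := by
    have hvc : ((‖S x‖ : ℝ) : ℂ) ≠ 0 := Complex.ofReal_ne_zero.mpr hSn
    rw [hy]
    simp only [ContinuousLinearMap.coe_coe, inner_smul_right, map_inv₀, Complex.conj_ofReal,
      inner_self_eq_norm_sq_to_K]
    field_simp
    rfl
  have pol := inner_map_polarization' (S : H →ₗ[ℂ] H) x y
  rw [hin] at pol
  have habs : ‖S x‖ = ‖(⟪(S : H →ₗ[ℂ] H) (x + y), x + y⟫_ℂ -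
      ⟪(S : H →ₗ[ℂ] H) (x - y), x - y⟫_ℂ -
      Complex.I * ⟪(S : H →ₗ[ℂ] H) (x + Complex.I • y), x + Complex.I • y⟫_ℂ +
      Complex.I * ⟪(S : H →ₗ[ℂ] H) (x - Complex.I • y), x - Complex.I • y⟫_ℂ) / 4‖ := by
    rw [← pol, Complex.norm_real, Real.norm_eq_abs, abs_of_nonneg (norm_nonneg _)]
  set A := ⟪(S : H →ₗ[ℂ] H) (x + y), x + y⟫_ℂ
  set B := ⟪(S : H →ₗ[ℂ] H) (x - y), x - y⟫_ℂ
  set C := ⟪(S : H →ₗ[ℂ] H) (x + Complex.I • y), x + Complex.I • y⟫_ℂ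
  set D := ⟪(S : H →ₗ[ℂ] H) (x - Complex.I • y), x - Complex.I • y⟫_ℂ
  have tri : ‖A - B - Complex.I * C + Complex.I * D‖ ≤
      ‖A‖ + ‖B‖ + ‖C‖ + ‖D‖ := by
    calc ‖A - B - Complex.I * C + Complex.I * D‖
        ≤ ‖A - B - Complex.I * C‖ + ‖Complex.I * D‖ :=
          norm_add_le _ _
      _ ≤ ‖A - B‖ + ‖Complex.I * C‖ + ‖Complex.I * D‖ :=
          add_le_add_left (abs_sub_le' _ _) _
      _ ≤ ‖A‖ + ‖B‖ + ‖Complex.I * C‖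
            + ‖Complex.I * D‖ := by
          have := abs_sub_le' A B
          gcongr
      _ = ‖A‖ + ‖B‖ + ‖C‖ + ‖D‖ := by
          rw [norm_mul, norm_mul, Complex.norm_I, one_mul, one_mul]
  have hA : ‖A‖ ≤ M * ‖x + y‖ ^ 2 := h' _
  have hB : ‖B‖ ≤ M * ‖x - y‖ ^ 2 := h' _
  have hC : ‖C‖ ≤ M * ‖x + Complex.I • y‖ ^ 2 := h' _
  have hD : ‖D‖ ≤ M * ‖x - Complex.I • y‖ ^ 2 := h' _
  have par1 := parallelogram_law_with_norm ℂ x y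
  have par2 := parallelogram_law_with_norm ℂ x (Complex.I • y)
  have hIy : ‖Complex.I • y‖ = 1 := by
    rw [norm_smul, Complex.norm_I, one_mul, hyn]
  rw [habs, norm_div]
  have h4 : ‖(4:ℂ)‖ = 4 := by norm_num [Complex.norm_ofNat]
  rw [h4]
  rw [hx, hyn] at par1
  rw [hx, hIy] at par2
  nlinarith [tri, hA, hB, hC, hD, par1, par2]

theorem stmt_13 {d : ℕ} (hdim : 2 ≤ Module.rank ℂ H) (q : ℝ) (hq : q ∈ Set.Ioo (0:ℝ) 1)
    (T : Fin d → H →L[ℂ] H) :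
    q / (2 * Real.sqrt d * (2 - q ^ 2)) * tupNorm T ≤ Jtw (q : ℂ) T ∧
      Jtw (q : ℂ) T ≤ tupNorm T := by

  obtain ⟨hq0, hq1⟩ := hq
  have htb := tupSet_bdd (H := H) T
  have hw0 : 0 ≤ Jtw (q : ℂ) T := aux_Jtw_nonneg hdim hq0.le hq1.le T
  set w := Jtw (q : ℂ) T with hwdef
  constructor
  · -- lower bound
    by_cases hd : d = 0
    · subst hd
      simp only [Nat.cast_zero, Real.sqrt_zero, mul_zero, zero_mul, div_zero]
      simpa using hw0
    · have hd0 : 0 < (d : ℝ) := by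
        exact_mod_cast Nat.pos_of_ne_zero hd
      have hsd : 0 < Real.sqrt d := Real.sqrt_pos.mpr hd0
      have h2q : (1:ℝ) ≤ 2 - q ^ 2 := by nlinarith
      have hbound : ∀ i : Fin d, ∀ x : H, ‖x‖ = 1 → ‖(T i) x‖ ≤ 2 * (w / q) := by
        intro i x hx
        apply norm_apply_le (by positivity) _ hx
        intro u
        by_cases hu : u = 0
        · simp [hu]
        · have hun : ‖u‖ ≠ 0 := norm_ne_zero_iff.mpr hu
          set z : H := ((‖u‖ : ℂ))⁻¹ • u with hz
          have hzn : ‖z‖ = 1 := by rw [hz, norm_smul]; simp [hun]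
          have hstep := step2 hdim hq0 hq1.le T i hzn
          have hrel : ⟪z, (T i) z⟫_ℂ = ((‖u‖ : ℂ))⁻¹ * ((starRingEnd ℂ) ((‖u‖ : ℂ))⁻¹)
              * ⟪u, (T i) u⟫_ℂ := by
            rw [hz, map_smul, inner_smul_left, inner_smul_right]
            ring
          have habs : ‖⟪z, (T i) z⟫_ℂ‖ = (‖u‖^2)⁻¹ * ‖⟪u, (T i) u⟫_ℂ‖ := by
            rw [hrel, norm_mul, norm_mul, Complex.norm_conj, norm_inv, Complex.norm_real, Real.norm_eq_abs,
              abs_of_nonneg (norm_nonneg u)]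
            ring
          have h1 : ‖⟪z, (T i) z⟫_ℂ‖ ≤ w / q := by
            rw [le_div_iff₀ hq0]
            linarith [hstep]
          calc ‖⟪u, (T i) u⟫_ℂ‖ = ‖u‖^2 * ‖⟪z, (T i) z⟫_ℂ‖ := by
                rw [habs]
                field_simp
          _ ≤ ‖u‖^2 * (w / q) := by
                apply mul_le_mul_of_nonneg_left h1 (by positivity)
          _ = w / q * ‖u‖^2 := by ring
      have htup : tupNorm T ≤ Real.sqrt d * (2 * (w / q)) := by
        apply Real.sSup_le
        · rintro r ⟨x, hx, rfl⟩
          have hsum : (∑ i, ‖(T i) x‖ ^ 2) ≤ (d : ℝ) * (2 * (w / q)) ^ 2 := by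
            calc (∑ i, ‖(T i) x‖ ^ 2) ≤ ∑ _i : Fin d, (2 * (w / q)) ^ 2 :=
                Finset.sum_le_sum fun i _ =>
                  pow_le_pow_left₀ (norm_nonneg _) (hbound i x hx) 2
            _ = (d : ℝ) * (2 * (w / q)) ^ 2 := by
                rw [Finset.sum_const, Finset.card_univ, Fintype.card_fin, nsmul_eq_mul]
          calc Real.sqrt (∑ i, ‖(T i) x‖ ^ 2) ≤ Real.sqrt ((d : ℝ) * (2 * (w / q)) ^ 2) :=
              Real.sqrt_le_sqrt hsum
          _ = Real.sqrt d * (2 * (w / q)) := by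
              rw [Real.sqrt_mul hd0.le, Real.sqrt_sq (by positivity)]
        · positivity
      have hkey : q / (2 * Real.sqrt d * (2 - q ^ 2)) * tupNorm T ≤
          q / (2 * Real.sqrt d * (2 - q ^ 2)) * (Real.sqrt d * (2 * (w / q))) :=
        mul_le_mul_of_nonneg_left htup (by positivity)
      refine hkey.trans ?_
      have heq : q / (2 * Real.sqrt d * (2 - q ^ 2)) * (Real.sqrt d * (2 * (w / q)))
          = w / (2 - q ^ 2) := by
        have h2q0 : (2 - q ^ 2) ≠ 0 := by nlinarith
        field_simp
      rw [heq]
      exact div_le_self hw0 h2q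
  · -- upper bound
    apply Real.sSup_le
    · rintro r ⟨x, y, hx, hy, -, rfl⟩
      have h1 : Real.sqrt (∑ i, ‖⟪y, (T i) x⟫_ℂ‖ ^ 2) ≤
          Real.sqrt (∑ i, ‖(T i) x‖ ^ 2) := by
        apply Real.sqrt_le_sqrt
        apply Finset.sum_le_sum
        intro i _
        have : ‖⟪y, (T i) x⟫_ℂ‖ ≤ ‖(T i) x‖ := by
          calc ‖⟪y, (T i) x⟫_ℂ‖ = ‖⟪y, (T i) x⟫_ℂ‖ := rfl
          _ ≤ ‖y‖ * ‖(T i) x‖ := norm_inner_le_norm _ _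
          _ = ‖(T i) x‖ := by rw [hy, one_mul]
        exact pow_le_pow_left₀ (norm_nonneg _) this 2
      exact h1.trans (le_csSup htb ⟨x, hx, rfl⟩)
    · obtain ⟨u, hu⟩ := exists_unit hdim
      exact le_trans (Real.sqrt_nonneg _) (le_csSup htb ⟨u, hu, rfl⟩)
end
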